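/- Let p be an odd prime. Then every finite p-subgroup of PGL₂(ℂ) is cyclic. -/
import Mathlib

open Matrix

local notation "M2" => Matrix (Fin 2) (Fin 2) ℂ

private lemma span_of_commute' (c X : M2) (hns : ∀ μ : ℂ, c ≠ μ • 1) (h : X * c = c * X) :
    ∃ s t : ℂ, X = s • 1 + t • c := by
  have hent : ∀ i j, (X * c) i j = (c * X) i j := fun i j => by rw [h]
  have E00 := hent 0 0
  have E01 := hent 0 1
  have E10 := hent 1 0
  simp only [Matrix.mul_apply, Fin.sum_univ_two] at E00 E01 E10
  by_cases hb : c 0 1 ≠ 0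
  · refine ⟨X 0 0 - X 0 1 / c 0 1 * c 0 0, X 0 1 / c 0 1, ?_⟩
    ext i j
    fin_cases i <;> fin_cases j <;> simp [Matrix.one_apply] <;> field_simp
    · linear_combination -E00
    · linear_combination -E01
  · push_neg at hb
    by_cases hc : c 1 0 ≠ 0
    · refine ⟨X 0 0 - X 1 0 / c 1 0 * c 0 0, X 1 0 / c 1 0, ?_⟩
      ext i j
      fin_cases i <;> fin_cases j <;> simp [Matrix.one_apply] <;> field_simp
      · linear_combination E00
      · linear_combination E10
    · push_neg at hc
      have had : c 0 0 ≠ c 1 1 := by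
        intro had
        apply hns (c 0 0)
        ext i j
        fin_cases i <;> fin_cases j <;> simp [Matrix.one_apply, hb, hc, had]
      have hy : X 0 1 = 0 := by
        have h' : X 0 1 * (c 1 1 - c 0 0) = 0 := by
          rw [hb] at E01; linear_combination E01
        rcases mul_eq_zero.mp h' with h' | h'
        · exact h'
        · exact absurd (sub_eq_zero.mp h').symm had
      have hz : X 1 0 = 0 := by
        have h' : X 1 0 * (c 0 0 - c 1 1) = 0 := by
          rw [hc] at E10; linear_combination E10
        rcases mul_eq_zero.mp h' with h' | h'
        · exact h'
        · exact absurd (sub_eq_zero.mp h') had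
      refine ⟨X 0 0 - (X 0 0 - X 1 1) / (c 0 0 - c 1 1) * c 0 0,
        (X 0 0 - X 1 1) / (c 0 0 - c 1 1), ?_⟩
      have hsub : c 0 0 - c 1 1 ≠ 0 := sub_ne_zero.mpr had
      ext i j
      fin_cases i <;> fin_cases j <;> simp [Matrix.one_apply, hy, hz, hb, hc] <;> field_simp
      ring

private lemma mulM1' (c : M2) (α β s t : ℂ) (h1 : c.trace = α + β) (h2 : c.det = α * β) :
    (s • 1 + t • c) * (c - β • 1) = (s + t*α) • c - (β*(s + t*α)) • (1 : M2) := by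
  have h1' : c 0 0 + c 1 1 = α + β := by simpa [Matrix.trace_fin_two] using h1
  have h2' : c 0 0 * c 1 1 - c 0 1 * c 1 0 = α * β := by simpa [Matrix.det_fin_two] using h2
  ext i j
  fin_cases i <;> fin_cases j <;>
    simp [Matrix.mul_apply, Fin.sum_univ_two, Matrix.one_apply]
  · linear_combination t*(c 0 0)*h1' - t*h2'
  · linear_combination t*(c 0 1)*h1'
  · linear_combination t*(c 1 0)*h1'
  · linear_combination t*(c 1 1)*h1' - t*h2'

private lemma detM' (c : M2) (α β s t : ℂ) (h1 : c.trace = α + β) (h2 : c.det = α * β) :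
    (s • 1 + t • c).det = (s + t*α) * (s + t*β) := by
  have h1' : c 0 0 + c 1 1 = α + β := by simpa [Matrix.trace_fin_two] using h1
  have h2' : c 0 0 * c 1 1 - c 0 1 * c 1 0 = α * β := by simpa [Matrix.det_fin_two] using h2
  rw [Matrix.det_fin_two]
  simp [Matrix.one_apply]
  linear_combination s*t*h1' + t^2*h2'

private lemma prodM' (c : M2) (α β s t s' t' : ℂ) (h1 : c.trace = α + β) (h2 : c.det = α * β) :
    (s • 1 + t • c) * (s' • 1 + t' • c)
      = (s*s' - t*t'*(α*β)) • 1 + (s*t' + t*s' + t*t'*(α+β)) • c := by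
  have h1' : c 0 0 + c 1 1 = α + β := by simpa [Matrix.trace_fin_two] using h1
  have h2' : c 0 0 * c 1 1 - c 0 1 * c 1 0 = α * β := by simpa [Matrix.det_fin_two] using h2
  ext i j
  fin_cases i <;> fin_cases j <;>
    simp [Matrix.mul_apply, Fin.sum_univ_two, Matrix.one_apply]
  · linear_combination t*t'*(c 0 0)*h1' - t*t'*h2'
  · linear_combination t*t'*(c 0 1)*h1'
  · linear_combination t*t'*(c 1 0)*h1'
  · linear_combination t*t'*(c 1 1)*h1' - t*t'*h2'

private noncomputable def ff' (c : M2) (α β : ℂ) (A : M2) : ℂ :=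
  - (A * (c - β • 1)).trace / (A * (c - α • 1)).trace

private lemma ff_eval' (c : M2) (α β s t : ℂ) (h1 : c.trace = α + β) (h2 : c.det = α * β)
    (hne : α ≠ β) (hβ : s + t*β ≠ 0) :
    ff' c α β (s • 1 + t • c) = (s + t*α)/(s + t*β) := by
  have e1 := mulM1' c α β s t h1 h2
  have e2 := mulM1' c β α s t (by rw [h1]; ring) (by rw [h2]; ring)
  have hN : ((s • 1 + t • c) * (c - β • 1)).trace = (s + t*α)*(α - β) := by
    rw [e1, Matrix.trace_sub, Matrix.trace_smul, Matrix.trace_smul, Matrix.trace_one, h1]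
    simp; ring
  have hD : ((s • 1 + t • c) * (c - α • 1)).trace = (s + t*β)*(β - α) := by
    rw [e2, Matrix.trace_sub, Matrix.trace_smul, Matrix.trace_smul, Matrix.trace_one, h1]
    simp; ring
  rw [ff', hN, hD]
  have h3 : β - α ≠ 0 := sub_ne_zero.mpr hne.symm
  field_simp
  ring

private lemma eig_ne' (c : M2) (n : ℕ) (hn : n ≠ 0) (hcn : c ^ n = 1) (hns : ∀ μ : ℂ, c ≠ μ • 1)
    (α β : ℂ) (h1 : c.trace = α + β) (h2 : c.det = α * β) : α ≠ β := by
  intro hab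
  subst hab
  set N : M2 := c - α • 1 with hN
  have h1' : c 0 0 + c 1 1 = α + α := by simpa [Matrix.trace_fin_two] using h1
  have h2' : c 0 0 * c 1 1 - c 0 1 * c 1 0 = α * α := by simpa [Matrix.det_fin_two] using h2
  have hNsq : N * N = 0 := by
    rw [hN]
    ext i j
    fin_cases i <;> fin_cases j <;>
      simp [Matrix.mul_apply, Fin.sum_univ_two, Matrix.one_apply]
    · linear_combination (c 0 0)*h1' - h2'
    · linear_combination (c 0 1)*h1'
    · linear_combination (c 1 0)*h1'
    · linear_combination (c 1 1)*h1' - h2'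
  have hc : c = α • 1 + N := by rw [hN]; abel
  have key : ∀ k : ℕ, c ^ (k+1) = (α^(k+1)) • 1 + ((k+1 : ℂ) * α^k) • N := by
    intro k
    induction k with
    | zero => simpa using hc
    | succ k ih =>
      rw [pow_succ, ih, hc]
      rw [add_mul, mul_add, mul_add, smul_mul_smul_comm]
      simp only [mul_one, one_mul, Matrix.smul_mul, Matrix.mul_smul, hNsq, smul_zero]
      push_cast
      module
  obtain ⟨m, rfl⟩ : ∃ m, n = m + 1 := ⟨n - 1, (Nat.succ_pred_eq_of_pos (Nat.pos_of_ne_zero hn)).symm⟩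
  have hkey := key m
  rw [hcn] at hkey
  have htrN : N.trace = 0 := by
    rw [hN]
    simp [Matrix.trace_sub, Matrix.trace_smul, h1]
    ring
  have htr : (2 : ℂ) = α^(m+1) * 2 := by
    have := congrArg Matrix.trace hkey
    simpa [Matrix.trace_add, Matrix.trace_smul, htrN] using this
  have hα1 : α^(m+1) = 1 := by linear_combination -htr/2
  have hαne : α ≠ 0 := by
    intro h0; rw [h0] at hα1; simp at hα1
  have hNzero : ((m+1 : ℂ) * α^m) • N = 0 := by
    rw [hα1] at hkey
    have h3 : (1 : M2) = 1 + ((m+1:ℂ) * α^m) • N := by simpa using hkey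
    have h4 := h3.symm
    rwa [add_eq_left] at h4
  have hcoeff : ((m:ℂ)+1) * α^m ≠ 0 := by
    apply mul_ne_zero
    · exact Nat.cast_add_one_ne_zero m
    · exact pow_ne_zero _ hαne
  have hN0 : N = 0 := by
    rwa [smul_eq_zero_iff_right hcoeff] at hNzero
  exact hns α (by rw [show c = α•1 + N from hc, hN0]; simp)

private lemma anticomm_false' (c A : M2) (n : ℕ) (hodd : Odd n) (hcn : c ^ n = 1)
    (h : c * A = -(A * c)) (hA : A.det ≠ 0) : False := by
  have key : ∀ k : ℕ, c ^ k * A = ((-1:ℂ))^k • (A * c ^ k) := by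
    intro k
    induction k with
    | zero => simp
    | succ k ih =>
      rw [pow_succ, pow_succ]
      calc c ^ k * c * A = c ^ k * (c * A) := by rw [mul_assoc]
        _ = c ^ k * (-(A * c)) := by rw [h]
        _ = -((c ^ k * A) * c) := by rw [mul_assoc]; simp
        _ = -((((-1:ℂ))^k • (A * c ^ k)) * c) := by rw [ih]
        _ = ((-1:ℂ))^(k+1) • (A * (c ^ k * c)) := by
            simp [Matrix.smul_mul, pow_succ, mul_assoc]
  have h2 := key n
  rw [hcn] at h2
  rw [hodd.neg_one_pow] at h2
  simp only [one_mul, mul_one, neg_smul, one_smul] at h2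
  have h3 : (2:ℂ) • A = 0 := by
    rw [two_smul]
    nth_rewrite 1 [h2]
    simp
  have hA0 : A = 0 := by
    rwa [smul_eq_zero_iff_right (by norm_num : (2:ℂ) ≠ 0)] at h3
  rw [hA0] at hA
  simp at hA

private lemma mem_center_GL' (g : GL (Fin 2) ℂ) :
    g ∈ Subgroup.center (GL (Fin 2) ℂ) ↔ ∃ μ : ℂ, (g : M2) = μ • 1 := by
  constructor
  · intro hg
    have key : ∀ t : TransvectionStruct (Fin 2) ℂ, Commute t.toMatrix (g : M2) := by
      intro t
      set u : GL (Fin 2) ℂ := ⟨t.toMatrix, t.inv.toMatrix, t.mul_inv, t.inv_mul⟩ with hu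
      have h1 := (Subgroup.mem_center_iff.mp hg u)
      have h2 := congrArg (fun x : GL (Fin 2) ℂ => (x : M2)) h1
      simpa [Commute, SemiconjBy, hu] using h2
    obtain ⟨r, hr⟩ := Matrix.mem_range_scalar_of_commute_transvectionStruct key
    refine ⟨r, ?_⟩
    rw [← hr, Matrix.scalar_apply, Matrix.smul_one_eq_diagonal]
  · rintro ⟨μ, hμ⟩
    rw [Subgroup.mem_center_iff]
    intro h
    ext : 1
    push_cast
    rw [hμ]
    simp

theorem stmt_4 {p : ℕ} (hp : p.Prime) (hodd : Odd p)
    (G : Subgroup (GL (Fin 2) ℂ ⧸ Subgroup.center (GL (Fin 2) ℂ))) [Finite G]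
    (hG : IsPGroup p G) : IsCyclic G := by
  rcases subsingleton_or_nontrivial G with hs | hn
  · exact isCyclic_of_subsingleton
  haveI : Fact p.Prime := ⟨hp⟩
  haveI : Nontrivial (Subgroup.center G) := hG.center_nontrivial
  -- a nontrivial central element z of G
  obtain ⟨z', hz'⟩ := exists_ne (1 : Subgroup.center G)
  set g₀ : G := (z' : G) with hg₀
  have hg₀ne : g₀ ≠ 1 := by
    intro h
    exact hz' (Subtype.ext (by simpa [hg₀] using h))
  set z : GL (Fin 2) ℂ ⧸ Subgroup.center (GL (Fin 2) ℂ) := ((g₀ : G) : GL (Fin 2) ℂ ⧸ Subgroup.center (GL (Fin 2) ℂ)) with hzdef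
  have hz1 : z ≠ 1 := by
    intro h
    exact hg₀ne (by exact_mod_cast Subtype.ext (by simpa [hzdef] using h))
  have hzc : ∀ x, x ∈ G → z * x = x * z := by
    intro x hx
    have := Subgroup.mem_center_iff.mp z'.2 ⟨x, hx⟩
    have h2 := congrArg (fun w : G => (w : GL (Fin 2) ℂ ⧸ Subgroup.center (GL (Fin 2) ℂ))) this
    simpa [hzdef] using h2.symm
  obtain ⟨k, hk⟩ := hG g₀
  set n : ℕ := p ^ k with hndef
  have hn0 : n ≠ 0 := pow_ne_zero _ hp.pos.ne'
  have hnodd : Odd n := hodd.pow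
  have hzn : z ^ n = 1 := by
    have := congrArg (fun w : G => (w : GL (Fin 2) ℂ ⧸ Subgroup.center (GL (Fin 2) ℂ))) hk
    simpa [hzdef] using this
  -- lift z to GL
  obtain ⟨a₀, ha₀⟩ := QuotientGroup.mk_surjective z
  have hdetGL : ∀ g : GL (Fin 2) ℂ, ((g : M2)).det ≠ 0 := by
    intro g
    exact ((Matrix.isUnit_iff_isUnit_det (g : M2)).mp g.isUnit).ne_zero
  obtain ⟨μ, hμ⟩ : ∃ μ : ℂ, ((a₀ : M2)) ^ n = μ • 1 := by
    have h1 : ((a₀ ^ n : GL (Fin 2) ℂ) : GL (Fin 2) ℂ ⧸ Subgroup.center (GL (Fin 2) ℂ)) = 1 := by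
      rw [QuotientGroup.mk_pow, ha₀, hzn]
    obtain ⟨μ, hμ⟩ := (mem_center_GL' _).mp ((QuotientGroup.eq_one_iff _).mp h1)
    exact ⟨μ, by rw [← hμ]; exact (Units.val_pow_eq_pow_val a₀ n).symm⟩
  have hscalar_ne : ∀ (g : GL (Fin 2) ℂ) (ρ : ℂ), (g : M2) = ρ • 1 → ρ ≠ 0 := by
    intro g ρ hgρ h0
    apply hdetGL g
    rw [hgρ, h0]
    simp
  have hμ0 : μ ≠ 0 := by
    apply hscalar_ne (a₀ ^ n) μ
    rw [Units.val_pow_eq_pow_val]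
    exact hμ
  obtain ⟨ν, hν⟩ := IsAlgClosed.exists_pow_nat_eq μ (Nat.pos_of_ne_zero hn0)
  have hν0 : ν ≠ 0 := by
    intro h0
    rw [h0, zero_pow hn0] at hν
    exact hμ0 hν.symm
  set c : M2 := ν⁻¹ • ((a₀ : M2)) with hcdef
  have hcn : c ^ n = 1 := by
    rw [hcdef, smul_pow, hμ, smul_smul, inv_pow, hν, inv_mul_cancel₀ hμ0, one_smul]
  have hcns : ∀ ρ : ℂ, c ≠ ρ • 1 := by
    intro ρ hρc
    have hA : (a₀ : M2) = (ν * ρ) • 1 := by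
      have := congrArg (fun X : M2 => ν • X) hρc
      simpa [hcdef, smul_smul, mul_inv_cancel₀ hν0] using this
    have hmem := (mem_center_GL' a₀).mpr ⟨ν * ρ, hA⟩
    exact hz1 (by rw [← ha₀, QuotientGroup.eq_one_iff]; exact hmem)
  obtain ⟨d, hd⟩ := IsAlgClosed.exists_pow_nat_eq (c.trace ^ 2 - 4 * c.det) (by norm_num : 0 < 2)
  set α : ℂ := (c.trace + d)/2 with hαdef
  set β : ℂ := (c.trace - d)/2 with hβdef
  have h1 : c.trace = α + β := by rw [hαdef, hβdef]; ring
  have h2 : c.det = α * β := by rw [hαdef, hβdef]; field_simp; linear_combination hd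
  have hne : α ≠ β := eig_ne' c n hn0 hcn hcns α β h1 h2
  -- every lift of an element of G commutes with c
  have hcomm : ∀ A : GL (Fin 2) ℂ,
      ((A : GL (Fin 2) ℂ ⧸ Subgroup.center (GL (Fin 2) ℂ))) ∈ G →
      (A : M2) * c = c * (A : M2) := by
    intro A hA
    have hzx : z * (A : GL (Fin 2) ℂ ⧸ Subgroup.center (GL (Fin 2) ℂ))
        = (A : GL (Fin 2) ℂ ⧸ Subgroup.center (GL (Fin 2) ℂ)) * z := hzc _ hA
    rw [← ha₀] at hzx
    have hmk : ((a₀ * A : GL (Fin 2) ℂ) : GL (Fin 2) ℂ ⧸ Subgroup.center (GL (Fin 2) ℂ))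
        = ((A * a₀ : GL (Fin 2) ℂ) : GL (Fin 2) ℂ ⧸ Subgroup.center (GL (Fin 2) ℂ)) := by
      rw [QuotientGroup.mk_mul, QuotientGroup.mk_mul]
      exact hzx
    obtain ⟨μ', hμ'⟩ := (mem_center_GL' _).mp ((QuotientGroup.eq).mp hmk)
    have hrel2 : (A : M2) * (a₀ : M2) = μ' • ((a₀ : M2) * (A : M2)) := by
      have hgr : (A * a₀ : GL (Fin 2) ℂ) = (a₀ * A) * ((a₀ * A)⁻¹ * (A * a₀)) := by group
      have hval : ((A * a₀ : GL (Fin 2) ℂ) : M2) = ((a₀ * A : GL (Fin 2) ℂ) : M2) * (μ' • 1) := by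
        conv_lhs => rw [hgr]
        rw [Units.val_mul, hμ']
      rw [Units.val_mul, Units.val_mul, Matrix.mul_smul, mul_one] at hval
      exact hval
    have hdetsq : μ' ^ 2 = 1 := by
      have hdd := congrArg Matrix.det hrel2
      rw [Matrix.det_mul, Matrix.det_smul, Matrix.det_mul] at hdd
      simp only [Fintype.card_fin] at hdd
      have h9 : (μ' ^ 2 - 1) * ((a₀ : M2).det * (A : M2).det) = 0 := by
        linear_combination -hdd
      rcases mul_eq_zero.mp h9 with h' | h'
      · linear_combination h'
      · exact absurd h' (mul_ne_zero (hdetGL a₀) (hdetGL A))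
    have h10 : (μ' - 1) * (μ' + 1) = 0 := by linear_combination hdetsq
    rcases mul_eq_zero.mp h10 with h' | h'
    · have hμ1 : μ' = 1 := by linear_combination h'
      rw [hμ1, one_smul] at hrel2
      rw [hcdef, Matrix.mul_smul, Matrix.smul_mul, hrel2]
    · have hμ1 : μ' = -1 := by linear_combination h'
      exfalso
      rw [hμ1] at hrel2
      have hrel3 : (a₀ : M2) * (A : M2) = -((A : M2) * (a₀ : M2)) := by
        rw [hrel2]; simp
      refine anticomm_false' c (A : M2) n hnodd hcn ?_ (hdetGL A)
      rw [hcdef, Matrix.smul_mul, Matrix.mul_smul, hrel3]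
      simp
  -- a section of the quotient map
  set σ : (GL (Fin 2) ℂ ⧸ Subgroup.center (GL (Fin 2) ℂ)) → GL (Fin 2) ℂ :=
    Function.surjInv QuotientGroup.mk_surjective with hσdef
  have hσ : ∀ x, (QuotientGroup.mk (σ x) : GL (Fin 2) ℂ ⧸ Subgroup.center (GL (Fin 2) ℂ)) = x :=
    fun x => Function.surjInv_eq _ x
  have main : ∀ x, x ∈ G → ∃ s t : ℂ,
      ((σ x : GL (Fin 2) ℂ) : M2) = s • 1 + t • c ∧ s + t*α ≠ 0 ∧ s + t*β ≠ 0 := by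
    intro x hx
    have hcm := hcomm (σ x) (by rw [hσ]; exact hx)
    obtain ⟨s, t, hst⟩ := span_of_commute' c _ hcns hcm
    have hdet := hdetGL (σ x)
    rw [hst, detM' c α β s t h1 h2] at hdet
    exact ⟨s, t, hst, (mul_ne_zero_iff.mp hdet).1, (mul_ne_zero_iff.mp hdet).2⟩
  have hne0 : ∀ x : G, ff' c α β ((σ (x : GL (Fin 2) ℂ ⧸ Subgroup.center (GL (Fin 2) ℂ))
      : GL (Fin 2) ℂ) : M2) ≠ 0 := by
    intro x
    obtain ⟨s, t, hst, hu, hv⟩ := main _ x.2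
    rw [hst, ff_eval' c α β s t h1 h2 hne hv]
    exact div_ne_zero hu hv
  let Ψ : G →* ℂˣ :=
  { toFun := fun x => Units.mk0 _ (hne0 x)
    map_one' := by
      apply Units.ext
      simp only [Units.val_mk0, Units.val_one]
      have hσ1 : (σ ((1 : G) : GL (Fin 2) ℂ ⧸ Subgroup.center (GL (Fin 2) ℂ)) : GL (Fin 2) ℂ)
          ∈ Subgroup.center (GL (Fin 2) ℂ) := by
        rw [← QuotientGroup.eq_one_iff, hσ]
        simp
      obtain ⟨ρ, hρ⟩ := (mem_center_GL' _).mp hσ1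
      have hρ0 : ρ ≠ 0 := hscalar_ne _ ρ hρ
      have hmat : ((σ ((1 : G) : GL (Fin 2) ℂ ⧸ Subgroup.center (GL (Fin 2) ℂ)) : GL (Fin 2) ℂ)
          : M2) = ρ • 1 + (0:ℂ) • c := by rw [hρ]; simp
      rw [hmat, ff_eval' c α β ρ 0 h1 h2 hne (by simpa using hρ0)]
      simp [hρ0]
    map_mul' := by
      intro x y
      apply Units.ext
      simp only [Units.val_mk0, Units.val_mul]
      obtain ⟨sA, tA, hA, hA1, hA2⟩ := main _ x.2
      obtain ⟨sB, tB, hB, hB1, hB2⟩ := main _ y.2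
      have hmk : (QuotientGroup.mk ((σ (x : GL (Fin 2) ℂ ⧸ Subgroup.center (GL (Fin 2) ℂ)))
            * (σ (y : GL (Fin 2) ℂ ⧸ Subgroup.center (GL (Fin 2) ℂ))))
            : GL (Fin 2) ℂ ⧸ Subgroup.center (GL (Fin 2) ℂ))
          = QuotientGroup.mk (σ ((x * y : G) : GL (Fin 2) ℂ ⧸ Subgroup.center (GL (Fin 2) ℂ))) := by
        rw [QuotientGroup.mk_mul, hσ, hσ, hσ]
        push_cast
        rfl
      obtain ⟨ρ, hρ⟩ := (mem_center_GL' _).mp ((QuotientGroup.eq).mp hmk)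
      have hρ0 : ρ ≠ 0 := hscalar_ne _ ρ hρ
      have hC : ((σ ((x * y : G) : GL (Fin 2) ℂ ⧸ Subgroup.center (GL (Fin 2) ℂ)) : GL (Fin 2) ℂ)
            : M2)
          = ρ • (((σ (x : GL (Fin 2) ℂ ⧸ Subgroup.center (GL (Fin 2) ℂ)) : GL (Fin 2) ℂ) : M2)
            * ((σ (y : GL (Fin 2) ℂ ⧸ Subgroup.center (GL (Fin 2) ℂ)) : GL (Fin 2) ℂ) : M2)) := by
        set P := σ (x : GL (Fin 2) ℂ ⧸ Subgroup.center (GL (Fin 2) ℂ))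
        set Q := σ (y : GL (Fin 2) ℂ ⧸ Subgroup.center (GL (Fin 2) ℂ))
        set C := σ ((x * y : G) : GL (Fin 2) ℂ ⧸ Subgroup.center (GL (Fin 2) ℂ))
        have hgr : C = (P * Q) * ((P * Q)⁻¹ * C) := by group
        have hval : ((C : GL (Fin 2) ℂ) : M2) = ((P * Q : GL (Fin 2) ℂ) : M2) * (ρ • 1) := by
          conv_lhs => rw [hgr]
          rw [Units.val_mul, hρ]
        rw [hval, Units.val_mul, Matrix.mul_smul, mul_one]
      have hCst : ((σ ((x * y : G) : GL (Fin 2) ℂ ⧸ Subgroup.center (GL (Fin 2) ℂ))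
            : GL (Fin 2) ℂ) : M2)
          = (ρ * (sA*sB - tA*tB*(α*β))) • 1 + (ρ * (sA*tB + tA*sB + tA*tB*(α+β))) • c := by
        rw [hC, hA, hB, prodM' c α β sA tA sB tB h1 h2, smul_add, smul_smul, smul_smul]
      have hPα : ρ * (sA*sB - tA*tB*(α*β)) + ρ * (sA*tB + tA*sB + tA*tB*(α+β)) * α
          = ρ * ((sA + tA*α) * (sB + tB*α)) := by ring
      have hPβ : ρ * (sA*sB - tA*tB*(α*β)) + ρ * (sA*tB + tA*sB + tA*tB*(α+β)) * β
          = ρ * ((sA + tA*β) * (sB + tB*β)) := by ring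
      rw [hCst, ff_eval' c α β _ _ h1 h2 hne (by rw [hPβ]; exact mul_ne_zero hρ0 (mul_ne_zero hA2 hB2)),
        hA, hB, ff_eval' c α β sA tA h1 h2 hne hA2, ff_eval' c α β sB tB h1 h2 hne hB2,
        hPα, hPβ, mul_div_mul_left _ _ hρ0, mul_div_mul_comm] }
  have hinj : Function.Injective Ψ := by
    apply (injective_iff_map_eq_one Ψ).mpr
    intro x hx1
    have hval : ff' c α β ((σ (x : GL (Fin 2) ℂ ⧸ Subgroup.center (GL (Fin 2) ℂ))
        : GL (Fin 2) ℂ) : M2) = 1 := by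
      have := congrArg Units.val hx1
      simpa [Ψ] using this
    obtain ⟨s, t, hst, hu, hv⟩ := main _ x.2
    rw [hst, ff_eval' c α β s t h1 h2 hne hv] at hval
    have heq : s + t*α = s + t*β := by
      rw [div_eq_one_iff_eq hv] at hval
      exact hval
    have ht : t = 0 := by
      have h9 : t * (α - β) = 0 := by linear_combination heq
      rcases mul_eq_zero.mp h9 with h' | h'
      · exact h'
      · exact absurd (sub_eq_zero.mp h') hne
    have hsc : (σ (x : GL (Fin 2) ℂ ⧸ Subgroup.center (GL (Fin 2) ℂ)) : GL (Fin 2) ℂ)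
        ∈ Subgroup.center (GL (Fin 2) ℂ) :=
      (mem_center_GL' _).mpr ⟨s, by rw [hst, ht]; simp⟩
    have hx2 : (x : GL (Fin 2) ℂ ⧸ Subgroup.center (GL (Fin 2) ℂ)) = 1 := by
      rw [← hσ (x : GL (Fin 2) ℂ ⧸ Subgroup.center (GL (Fin 2) ℂ)), QuotientGroup.eq_one_iff]
      exact hsc
    exact Subtype.ext hx2
  exact isCyclic_of_subgroup_isDomain ((Units.coeHom ℂ).comp Ψ)
    (fun a b hab => hinj (Units.ext hab))
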